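/- arXiv:1306.5873 — 2 statements merged into one kernel-verified Lean document; each statement's English description precedes it below -/
import Mathlib

section
/- Define sn(z, m) for m ∈ [0,1] as the inverse function of the incomplete elliptic integral u ↦ ∫₀^u dt/√((1−t²)(1−m t²)) on a neighborhood of 0. Then for real u with 0 ≤ u < π/2 and m₁ ∈ [0,1], sn(u, m₁)/cn(u, m₁) ≤ tan u, where cn = √(1 − sn²). -/
noncomputable section

/-- The incomplete elliptic integral of the first kind (in Jacobi form),
`ellF m x = ∫₀^x dt / √((1 - t²)(1 - m t²))`. -/
def ellF (m x : ℝ) : ℝ := ∫ t in (0:ℝ)..x, 1 / Real.sqrt ((1 - t ^ 2) * (1 - m * t ^ 2))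

/-- The Jacobi elliptic function `sn(u, m)`, defined as the inverse function of the
incomplete elliptic integral `x ↦ ellF m x` (on a neighborhood of `0`). -/
def sn (u m : ℝ) : ℝ := Function.invFun (ellF m) u

/-- The Jacobi elliptic function `cn(u, m) = √(1 - sn(u,m)²)`. -/
def cn (u m : ℝ) : ℝ := Real.sqrt (1 - sn u m ^ 2)

end

open Real Set

lemma ell_pos {m y : ℝ} (hm1 : m ≤ 1) (hy : y < 1) :
    ∀ t ∈ Icc (0:ℝ) y, 0 < (1 - t ^ 2) * (1 - m * t ^ 2) := by
  intro t ht
  obtain ⟨ht0, hty⟩ := ht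
  have h1 : t ^ 2 < 1 := by nlinarith
  have h2 : m * t ^ 2 < 1 := by nlinarith [sq_nonneg t]
  nlinarith

lemma ell_cont {m y : ℝ} (hm1 : m ≤ 1) (hy : y < 1) :
    ContinuousOn (fun t : ℝ => 1 / Real.sqrt ((1 - t ^ 2) * (1 - m * t ^ 2))) (Icc 0 y) := by
  apply ContinuousOn.div continuousOn_const
  · exact ((continuous_const.sub (continuous_pow 2)).mul
      (continuous_const.sub (continuous_const.mul (continuous_pow 2)))).sqrt.continuousOn
  · intro t ht
    exact (Real.sqrt_pos.mpr (ell_pos hm1 hy t ht)).ne'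

lemma arcsin_le_ellF {m x : ℝ} (hm0 : 0 ≤ m) (hm1 : m ≤ 1) (hx0 : 0 ≤ x) (hx1 : x < 1) :
    Real.arcsin x ≤ ellF m x := by
  have hasin : Real.arcsin x = ∫ t in (0:ℝ)..x, 1 / Real.sqrt (1 - t ^ 2) := by
    have := intervalIntegral.integral_eq_sub_of_hasDerivAt (f := Real.arcsin)
      (f' := fun t => 1 / Real.sqrt (1 - t ^ 2)) (a := 0) (b := x)
      (fun t ht => by
        rw [uIcc_of_le hx0] at ht
        exact Real.hasDerivAt_arcsin (by nlinarith [ht.1, ht.2]) (by nlinarith [ht.1, ht.2]))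
      ?_
    · rw [this, Real.arcsin_zero, sub_zero]
    · have : ContinuousOn (fun t : ℝ => 1 / Real.sqrt (1 - t ^ 2)) (Icc 0 x) := by
        have := ell_cont (m := 0) (y := x) (by norm_num) hx1
        simpa using this
      rw [intervalIntegrable_iff_integrableOn_Icc_of_le hx0]
      exact this.integrableOn_Icc
  rw [hasin]
  apply intervalIntegral.integral_mono_on hx0
  · rw [intervalIntegrable_iff_integrableOn_Icc_of_le hx0]
    have := ell_cont (m := 0) (y := x) (by norm_num) hx1
    exact (by simpa using this :
      ContinuousOn (fun t : ℝ => 1 / Real.sqrt (1 - t ^ 2)) (Icc 0 x)).integrableOn_Icc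
  · rw [intervalIntegrable_iff_integrableOn_Icc_of_le hx0]
    exact (ell_cont hm1 hx1).integrableOn_Icc
  · intro t ht
    have hpos := ell_pos hm1 hx1 t ht
    have h1 : (0:ℝ) < 1 - t ^ 2 := by nlinarith [ht.1, ht.2]
    apply one_div_le_one_div_of_le (Real.sqrt_pos.mpr hpos)
    apply Real.sqrt_le_sqrt
    nlinarith [ht.1, sq_nonneg t, mul_nonneg hm0 (sq_nonneg t), h1.le]

lemma ellF_surj {m u : ℝ} (hm0 : 0 ≤ m) (hm1 : m ≤ 1) (hu0 : 0 ≤ u) (hu : u < Real.pi / 2) :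
    ∃ x, ellF m x = u := by
  set u' := (u + Real.pi / 2) / 2 with hu'
  have hpi := Real.pi_pos
  have hu'0 : 0 < u' := by positivity
  have hu'lt : u' < Real.pi / 2 := by rw [hu']; linarith
  have huu' : u < u' := by rw [hu']; linarith
  set y := Real.sin u' with hy
  have hy0 : 0 ≤ y := Real.sin_nonneg_of_nonneg_of_le_pi hu'0.le (by linarith)
  have hy1 : y < 1 := by
    have := Real.strictMonoOn_sin (a := u') (b := Real.pi / 2)
      ⟨by linarith, hu'lt.le⟩ ⟨by linarith, le_refl _⟩ hu'lt
    rwa [Real.sin_pi_div_two] at this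
  have hcont : ContinuousOn (ellF m) (Icc 0 y) := by
    have h := intervalIntegral.continuousOn_primitive_interval (a := (0:ℝ)) (b := y)
      (f := fun t => 1 / Real.sqrt ((1 - t ^ 2) * (1 - m * t ^ 2))) (μ := MeasureTheory.volume) ?_
    · rwa [uIcc_of_le hy0] at h
    · rw [uIcc_of_le hy0]; exact (ell_cont hm1 hy1).integrableOn_Icc
  have h0 : ellF m 0 = 0 := intervalIntegral.integral_same
  have hyge : u' ≤ ellF m y := by
    have := arcsin_le_ellF hm0 hm1 hy0 hy1
    rwa [hy, Real.arcsin_sin (by linarith) hu'lt.le] at this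
  have hmem : u ∈ Icc (ellF m 0) (ellF m y) := by
    rw [h0]; exact ⟨hu0, by linarith⟩
  obtain ⟨x, _, hx⟩ := intermediate_value_Icc hy0 hcont hmem
  exact ⟨x, hx⟩

/-- For `0 ≤ u < π/2` and `m₁ ∈ [0,1]`, `sn(u,m₁)/cn(u,m₁) ≤ tan u`. -/
theorem sc_le_tan (u : ℝ) (hu0 : 0 ≤ u) (hu : u < Real.pi / 2)
    (m₁ : ℝ) (hm₁ : m₁ ∈ Set.Icc (0:ℝ) 1) :
    sn u m₁ / cn u m₁ ≤ Real.tan u := by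
  obtain ⟨hm0, hm1le⟩ := hm₁
  have hpi := Real.pi_pos
  have htan : 0 ≤ Real.tan u := Real.tan_nonneg_of_nonneg_of_le_pi_div_two hu0 hu.le
  obtain ⟨x₀, hx₀⟩ := ellF_surj hm0 hm1le hu0 hu
  have hsn : ellF m₁ (sn u m₁) = u := Function.invFun_eq ⟨x₀, hx₀⟩
  set x := sn u m₁ with hxdef
  by_cases hsq : 1 - x ^ 2 ≤ 0
  · have hcn : cn u m₁ = 0 := by
      rw [cn, ← hxdef]
      exact Real.sqrt_eq_zero_of_nonpos hsq
    rw [hcn, div_zero]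
    exact htan
  · push_neg at hsq
    have hx1 : x < 1 := by nlinarith
    have hcnpos : 0 < cn u m₁ := by
      rw [cn, ← hxdef]; exact Real.sqrt_pos.mpr hsq
    by_cases hxneg : x < 0
    · exact le_trans (div_nonpos_of_nonpos_of_nonneg hxneg.le hcnpos.le) htan
    · push_neg at hxneg
      have harc : Real.arcsin x ≤ u := hsn ▸ arcsin_le_ellF hm0 hm1le hxneg hx1
      have hxsin : x ≤ Real.sin u := by
        have := Real.sin_le_sin_of_le_of_le_pi_div_two
          (Real.neg_pi_div_two_le_arcsin x) hu.le harc
        rwa [Real.sin_arcsin (by linarith) hx1.le] at this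
      have hcos : 0 < Real.cos u := Real.cos_pos_of_mem_Ioo ⟨by linarith, hu⟩
      have hsinnn : 0 ≤ Real.sin u := Real.sin_nonneg_of_nonneg_of_le_pi hu0 (by linarith)
      have hsqrt : Real.cos u ≤ Real.sqrt (1 - x ^ 2) := by
        have h : Real.cos u = Real.sqrt (1 - Real.sin u ^ 2) := by
          rw [← Real.cos_sq', Real.sqrt_sq hcos.le]
        rw [h]
        apply Real.sqrt_le_sqrt
        nlinarith
      rw [Real.tan_eq_sin_div_cos]
      have hmain := div_le_div₀ hsinnn hxsin hcos hsqrt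
      rw [cn, ← hxdef]
      exact hmain
end

section
/- With sn, cn, dn the Jacobian elliptic functions with parameter m₁ ∈ [0,1], for fixed u ∈ (0, π/2) the function m₁ ↦ sn(u,m₁)/cn(u,m₁) is monotone decreasing in m₁ on [0,1]. -/
open Set MeasureTheory Real

namespace ScAux

/-- The integrand. -/
noncomputable def F (m t : ℝ) : ℝ := 1 / Real.sqrt ((1 - t ^ 2) * (1 - m * t ^ 2))

lemma ellF_eq (m x : ℝ) : ellF m x = ∫ t in (0:ℝ)..x, F m t := rfl

lemma ellF_fun (m : ℝ) : ellF m = fun x => ∫ t in (0:ℝ)..x, F m t := rfl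

lemma F_nonneg (m t : ℝ) : 0 ≤ F m t := by unfold F; positivity

lemma denom_pos {m t s : ℝ} (hm : m ≤ 1) (ht : t ∈ Set.Icc 0 s) (hs : s < 1) :
    0 < (1 - t ^ 2) * (1 - m * t ^ 2) := by
  obtain ⟨ht0, hts⟩ := ht
  have h1 : t ^ 2 < 1 := by nlinarith
  have h2 : m * t ^ 2 ≤ t ^ 2 := by nlinarith
  nlinarith

lemma F_contOn {m s : ℝ} (hm : m ≤ 1) (hs : s < 1) : ContinuousOn (F m) (Set.Icc 0 s) := by
  apply ContinuousOn.div continuousOn_const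
  · exact (Real.continuous_sqrt.comp (by continuity)).continuousOn
  · intro t ht
    exact (Real.sqrt_pos.mpr (denom_pos hm ht hs)).ne'

lemma F_intble {m x : ℝ} (hm : m ≤ 1) (h0 : 0 ≤ x) (hx : x < 1) :
    IntervalIntegrable (F m) volume 0 x := by
  apply ContinuousOn.intervalIntegrable
  rw [Set.uIcc_of_le h0]
  exact F_contOn hm hx

lemma F_le_F {a b t s : ℝ} (hab : a ≤ b) (hb : b ≤ 1) (ht : t ∈ Set.Icc 0 s) (hs : s < 1) :
    F a t ≤ F b t := by
  have hpb := denom_pos hb ht hs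
  unfold F
  apply one_div_le_one_div_of_le (Real.sqrt_pos.mpr hpb)
  apply Real.sqrt_le_sqrt
  have h1 : (0:ℝ) < 1 - t ^ 2 := by nlinarith [ht.1, ht.2]
  nlinarith [mul_le_mul_of_nonneg_left (mul_le_mul_of_nonneg_right hab (sq_nonneg t)) h1.le]

lemma ellF_mono_param {a b x : ℝ} (hab : a ≤ b) (hb : b ≤ 1) (h0 : 0 ≤ x) (hx : x < 1) :
    ellF a x ≤ ellF b x := by
  rw [ellF_eq, ellF_eq]
  exact intervalIntegral.integral_mono_on h0 (F_intble (hab.trans hb) h0 hx)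
    (F_intble hb h0 hx) (fun t ht => F_le_F hab hb ht hx)

lemma ellF_strictMono {m x y : ℝ} (hm : m ≤ 1) (h0 : 0 ≤ x) (hxy : x < y) (hy : y < 1) :
    ellF m x < ellF m y := by
  have hix : IntervalIntegrable (F m) volume 0 x := F_intble hm h0 (hxy.trans hy)
  have hixy : IntervalIntegrable (F m) volume x y := by
    apply ContinuousOn.intervalIntegrable
    apply (F_contOn hm hy).mono
    rw [Set.uIcc_of_le hxy.le]
    exact Set.Icc_subset_Icc h0 le_rfl
  have hadd := intervalIntegral.integral_add_adjacent_intervals hix hixy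
  have hpos : 0 < ∫ t in x..y, F m t := by
    apply intervalIntegral.intervalIntegral_pos_of_pos_on hixy _ hxy
    intro t ht
    have ht' : t ∈ Set.Icc 0 y := ⟨h0.trans ht.1.le, ht.2.le⟩
    exact one_div_pos.mpr (Real.sqrt_pos.mpr (denom_pos hm ht' hy))
  rw [ellF_eq, ellF_eq]
  linarith [hadd]

lemma ellF_zero {x : ℝ} (h0 : 0 ≤ x) (hx : x < 1) : ellF 0 x = Real.arcsin x := by
  unfold ellF
  have hderiv : ∀ t ∈ Set.uIcc (0:ℝ) x, HasDerivAt Real.arcsin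
      (1 / Real.sqrt ((1 - t ^ 2) * (1 - 0 * t ^ 2))) t := by
    intro t ht
    rw [Set.uIcc_of_le h0] at ht
    have h1 : t ≠ -1 := by intro h; rw [h] at ht; linarith [ht.1]
    have h2 : t ≠ 1 := by intro h; rw [h] at ht; linarith [ht.2]
    have := Real.hasDerivAt_arcsin h1 h2
    convert this using 2
    ring_nf
  rw [intervalIntegral.integral_eq_sub_of_hasDerivAt hderiv (F_intble zero_le_one h0 hx)]
  simp

lemma ellF_ge {m x : ℝ} (hm0 : 0 ≤ m) (hm1 : m ≤ 1) (h0 : 0 ≤ x) (hx : x < 1) :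
    Real.arcsin x ≤ ellF m x := by
  rw [← ellF_zero h0 hx]
  exact ellF_mono_param hm0 hm1 h0 hx

lemma ellF_nonpos {m y : ℝ} (hy : y ≤ 0) : ellF m y ≤ 0 := by
  have h1 : (0:ℝ) ≤ ∫ t in y..0, F m t :=
    intervalIntegral.integral_nonneg hy (fun t _ => F_nonneg m t)
  have h2 : ellF m y = -∫ t in y..0, F m t := by
    rw [ellF_eq, ← intervalIntegral.integral_symm]
  linarith

/-- Auxiliary point used for bounds: `sin ((u + π/2)/2)`. -/
lemma aux_point {u : ℝ} (hu0 : 0 < u) (hu2 : u < π / 2) :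
    ∃ s : ℝ, 0 ≤ s ∧ s < 1 ∧ u < Real.arcsin s := by
  have hpi := Real.pi_pos
  set v := (u + π / 2) / 2 with hv
  have hv0 : 0 < v := by positivity
  have hv2 : v < π / 2 := by rw [hv]; linarith
  have hvu : u < v := by rw [hv]; linarith
  refine ⟨Real.sin v, Real.sin_nonneg_of_nonneg_of_le_pi hv0.le (by linarith), ?_, ?_⟩
  · have := Real.strictMonoOn_sin (a := v) (b := π / 2)
      ⟨by linarith, hv2.le⟩ ⟨by linarith, le_rfl⟩ hv2
    simpa using this
  · rw [Real.arcsin_sin (by linarith) hv2.le]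
    exact hvu

lemma ellF_ne_of_ge_one {m y u : ℝ} (hm0 : 0 ≤ m) (hm1 : m ≤ 1) (hy : 1 ≤ y)
    (hu0 : 0 < u) (hu2 : u < π / 2) : ellF m y ≠ u := by
  obtain ⟨s, hs0, hs1, hsu⟩ := aux_point hu0 hu2
  by_cases hint : IntervalIntegrable (F m) volume 0 y
  · have hsy : s ≤ y := hs1.le.trans hy
    have hi1 : IntervalIntegrable (F m) volume 0 s := by
      apply hint.mono_set
      rw [Set.uIcc_of_le hs0, Set.uIcc_of_le (hs0.trans hsy)]
      exact Set.Icc_subset_Icc le_rfl hsy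
    have hi2 : IntervalIntegrable (F m) volume s y := by
      apply hint.mono_set
      rw [Set.uIcc_of_le hsy, Set.uIcc_of_le (hs0.trans hsy)]
      exact Set.Icc_subset_Icc hs0 le_rfl
    have hadd := intervalIntegral.integral_add_adjacent_intervals hi1 hi2
    have hnn : (0:ℝ) ≤ ∫ t in s..y, F m t :=
      intervalIntegral.integral_nonneg hsy (fun t _ => F_nonneg m t)
    have h1 : Real.arcsin s ≤ ellF m s := ellF_ge hm0 hm1 hs0 hs1
    have h2 : ellF m s ≤ ellF m y := by rw [ellF_eq, ellF_eq]; linarith [hadd]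
    intro h
    rw [h] at h2
    linarith
  · rw [ellF_eq, intervalIntegral.integral_undef hint]
    exact hu0.ne

lemma sn_spec {m u : ℝ} (hm : m ∈ Set.Icc (0:ℝ) 1) (hu : u ∈ Set.Ioo 0 (π / 2)) :
    sn u m ∈ Set.Ioo (0:ℝ) 1 ∧ ellF m (sn u m) = u := by
  obtain ⟨hu0, hu2⟩ := hu
  obtain ⟨s, hs0, hs1, hsu⟩ := aux_point hu0 hu2
  have hcont : ContinuousOn (ellF m) (Set.Icc 0 s) := by
    rw [ellF_fun]
    have := intervalIntegral.continuousOn_primitive_interval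
      (f := F m) (μ := volume) (a := 0) (b := s) ?_
    · rwa [Set.uIcc_of_le hs0] at this
    · rw [Set.uIcc_of_le hs0]
      exact (F_contOn hm.2 hs1).integrableOn_compact isCompact_Icc
  have hmem : u ∈ Set.Icc (ellF m 0) (ellF m s) := by
    constructor
    · rw [ellF_eq, intervalIntegral.integral_same]; exact hu0.le
    · exact le_trans (le_trans hsu.le (ellF_ge hm.1 hm.2 hs0 hs1)) le_rfl
  obtain ⟨x0, _, hx0⟩ := intermediate_value_Icc hs0 hcont hmem
  have hexists : ∃ x, ellF m x = u := ⟨x0, hx0⟩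
  have heq : ellF m (sn u m) = u := Function.invFun_eq hexists
  refine ⟨⟨?_, ?_⟩, heq⟩
  · by_contra h
    push_neg at h
    have := ellF_nonpos (m := m) h
    rw [heq] at this
    linarith
  · by_contra h
    push_neg at h
    exact ellF_ne_of_ge_one hm.1 hm.2 h hu0 hu2 heq

end ScAux

/-- For fixed `u ∈ (0, π/2)`, the function `m₁ ↦ sn(u,m₁)/cn(u,m₁)` is monotone
decreasing on `[0,1]`. -/
theorem sc_antitone_in_parameter (u : ℝ) (hu : u ∈ Set.Ioo 0 (Real.pi / 2)) :
    AntitoneOn (fun m₁ : ℝ => sn u m₁ / cn u m₁) (Set.Icc (0:ℝ) 1) := by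
  intro a ha b hb hab
  obtain ⟨⟨ha0, ha1⟩, hea⟩ := ScAux.sn_spec ha hu
  obtain ⟨⟨hb0, hb1⟩, heb⟩ := ScAux.sn_spec hb hu
  have hle : sn u b ≤ sn u a := by
    by_contra h
    push_neg at h
    have h1 : ellF a (sn u a) < ellF a (sn u b) := ScAux.ellF_strictMono ha.2 ha0.le h hb1
    have h2 : ellF a (sn u b) ≤ ellF b (sn u b) := ScAux.ellF_mono_param hab hb.2 hb0.le hb1
    rw [hea] at h1
    rw [heb] at h2
    linarith
  simp only
  unfold cn
  have hca : 0 < Real.sqrt (1 - sn u a ^ 2) := Real.sqrt_pos.mpr (by nlinarith)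
  have hcc : Real.sqrt (1 - sn u a ^ 2) ≤ Real.sqrt (1 - sn u b ^ 2) := by
    apply Real.sqrt_le_sqrt
    nlinarith
  exact div_le_div₀ ha0.le hle hca hcc
end
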